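/- Let B = Metric.closedBall (0 : EuclideanSpace ℂ (Fin 2)) 1 with the equivalence relation z ~ w iff z = w, or (‖z‖ = 1 and ‖w‖ = 1 and there exists t : Circle with t • z = w). Let S = Metric.sphere (0 : EuclideanSpace ℂ (Fin 3)) 1 with the equivalence relation x ≈ y iff there exists t : Circle with t • x = y. Then the quotient B/~ is homeomorphic to the quotient S/≈; that is, attaching the cone on S³ to ℂP¹ along the Hopf map yields ℂP². -/

import Mathlib

/-- The relation on the closed unit ball of `ℂ²` identifying boundary points in the
same circle orbit: attaching the cone on `S³` to `ℂP¹` along the Hopf map. -/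
def hopfAttachRel
    (z w : ↥(Metric.closedBall (0 : EuclideanSpace ℂ (Fin 2)) 1)) : Prop :=
  z = w ∨ (‖(z : EuclideanSpace ℂ (Fin 2))‖ = 1 ∧ ‖(w : EuclideanSpace ℂ (Fin 2))‖ = 1 ∧
    ∃ t : Circle, (t : ℂ) • (z : EuclideanSpace ℂ (Fin 2)) = (w : EuclideanSpace ℂ (Fin 2)))

/-- The scalar circle action relation on the unit sphere `S⁵ ⊆ ℂ³`. -/
def sphereCircleRel3
    (x y : ↥(Metric.sphere (0 : EuclideanSpace ℂ (Fin 3)) 1)) : Prop :=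
  ∃ t : Circle, (t : ℂ) • (x : EuclideanSpace ℂ (Fin 3)) = (y : EuclideanSpace ℂ (Fin 3))

open Metric

noncomputable section

-- the map on ambient spaces
def gmap (z : EuclideanSpace ℂ (Fin 2)) : EuclideanSpace ℂ (Fin 3) :=
  (WithLp.equiv 2 (Fin 3 → ℂ)).symm ![z 0, z 1, ((Real.sqrt (1 - ‖z‖^2) : ℝ) : ℂ)]

@[simp] lemma gmap_zero (z : EuclideanSpace ℂ (Fin 2)) : gmap z 0 = z 0 := rfl
@[simp] lemma gmap_one (z : EuclideanSpace ℂ (Fin 2)) : gmap z 1 = z 1 := rfl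
@[simp] lemma gmap_two (z : EuclideanSpace ℂ (Fin 2)) :
    gmap z 2 = ((Real.sqrt (1 - ‖z‖^2) : ℝ) : ℂ) := rfl

lemma norm_sq_two (z : EuclideanSpace ℂ (Fin 2)) : ‖z‖^2 = ‖z 0‖^2 + ‖z 1‖^2 := by
  rw [EuclideanSpace.norm_eq, Real.sq_sqrt (by positivity)]
  simp [Fin.sum_univ_two]

lemma gmap_norm {z : EuclideanSpace ℂ (Fin 2)} (hz : ‖z‖ ≤ 1) : ‖gmap z‖ = 1 := by
  have h1 : (0:ℝ) ≤ 1 - ‖z‖^2 := by nlinarith [norm_nonneg z]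
  rw [EuclideanSpace.norm_eq]
  rw [Fin.sum_univ_three]
  simp only [gmap_zero, gmap_one, gmap_two, Complex.norm_real, Real.norm_eq_abs,
    sq_abs, Real.sq_sqrt h1]
  rw [show ‖z 0‖^2 + ‖z 1‖^2 + (1 - ‖z‖^2) = 1 by rw [← norm_sq_two]; ring]
  exact Real.sqrt_one

lemma gmap_cont : Continuous gmap := by
  apply (PiLp.continuous_toLp 2 (fun _ : Fin 3 => ℂ)).comp
  apply continuous_pi
  intro i
  fin_cases i
  · exact (EuclideanSpace.proj (0 : Fin 2)).continuous
  · exact (EuclideanSpace.proj (1 : Fin 2)).continuous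
  · exact Complex.continuous_ofReal.comp
      (Real.continuous_sqrt.comp (continuous_const.sub (continuous_norm.pow 2)))

abbrev Ball := ↥(Metric.closedBall (0 : EuclideanSpace ℂ (Fin 2)) 1)
abbrev Sph := ↥(Metric.sphere (0 : EuclideanSpace ℂ (Fin 3)) 1)

def fB (z : Ball) : Sph :=
  ⟨gmap z, by
    rw [mem_sphere_zero_iff_norm]
    exact gmap_norm (mem_closedBall_zero_iff.mp z.2)⟩

lemma fB_cont : Continuous fB :=
  (gmap_cont.comp continuous_subtype_val).subtype_mk _

lemma sEquiv : Equivalence sphereCircleRel3 := by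
  constructor
  · intro x; exact ⟨1, by simp⟩
  · rintro x y ⟨t, ht⟩
    refine ⟨t⁻¹, ?_⟩
    rw [← ht, smul_smul, Circle.coe_inv, inv_mul_cancel₀ (Circle.coe_ne_zero t), one_smul]
  · rintro x y z ⟨t, ht⟩ ⟨s, hs⟩
    exact ⟨s * t, by rw [Circle.coe_mul, mul_smul, ht, hs]⟩

lemma fB_rel {z w : Ball} (h : hopfAttachRel z w) : sphereCircleRel3 (fB z) (fB w) := by
  rcases h with h | ⟨hz, hw, t, ht⟩
  · subst h; exact sEquiv.refl _
  · refine ⟨t, ?_⟩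
    have e0 := congrArg (fun v => v 0) ht
    have e1 := congrArg (fun v => v 1) ht
    simp only [PiLp.smul_apply, smul_eq_mul] at e0 e1
    ext i
    fin_cases i
    · simpa [fB, PiLp.smul_apply, smul_eq_mul] using e0
    · simpa [fB, PiLp.smul_apply, smul_eq_mul] using e1
    · simp [fB, PiLp.smul_apply, smul_eq_mul, hz, hw]

lemma circle_norm (t : Circle) : ‖(t:ℂ)‖ = 1 := mem_sphere_zero_iff_norm.mp t.2

lemma fB_inj {z w : Ball} (h : sphereCircleRel3 (fB z) (fB w)) : hopfAttachRel z w := by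
  obtain ⟨t, ht⟩ := h
  have hz : ‖(z : EuclideanSpace ℂ (Fin 2))‖ ≤ 1 := mem_closedBall_zero_iff.mp z.2
  have hw : ‖(w : EuclideanSpace ℂ (Fin 2))‖ ≤ 1 := mem_closedBall_zero_iff.mp w.2
  have e0 := congrArg (fun v => v 0) ht
  have e1 := congrArg (fun v => v 1) ht
  have e2 := congrArg (fun v => v 2) ht
  simp only [fB, PiLp.smul_apply, smul_eq_mul, gmap_zero, gmap_one, gmap_two] at e0 e1 e2
  have hab : Real.sqrt (1 - ‖(z : EuclideanSpace ℂ (Fin 2))‖^2)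
      = Real.sqrt (1 - ‖(w : EuclideanSpace ℂ (Fin 2))‖^2) := by
    have := congrArg norm e2
    rwa [norm_mul, circle_norm, one_mul, Complex.norm_real, Complex.norm_real,
      Real.norm_eq_abs, Real.norm_eq_abs, abs_of_nonneg (Real.sqrt_nonneg _),
      abs_of_nonneg (Real.sqrt_nonneg _)] at this
  by_cases hb0 : Real.sqrt (1 - ‖(w : EuclideanSpace ℂ (Fin 2))‖^2) = 0
  · -- boundary case
    have hwn : ‖(w : EuclideanSpace ℂ (Fin 2))‖ = 1 := by
      have h1 := Real.sqrt_eq_zero'.mp hb0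
      nlinarith [norm_nonneg (w : EuclideanSpace ℂ (Fin 2))]
    have hzn : ‖(z : EuclideanSpace ℂ (Fin 2))‖ = 1 := by
      have h1 := Real.sqrt_eq_zero'.mp (hab.trans hb0)
      nlinarith [norm_nonneg (z : EuclideanSpace ℂ (Fin 2))]
    refine Or.inr ⟨hzn, hwn, t, ?_⟩
    ext i
    fin_cases i
    · simpa [PiLp.smul_apply, smul_eq_mul] using e0
    · simpa [PiLp.smul_apply, smul_eq_mul] using e1
  · -- interior case: t = 1, z = w
    rw [hab] at e2
    have ht1 : (t : ℂ) = 1 := by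
      have hbc : ((Real.sqrt (1 - ‖(w : EuclideanSpace ℂ (Fin 2))‖^2) : ℝ) : ℂ) ≠ 0 := by
        exact_mod_cast hb0
      exact mul_right_cancel₀ hbc (e2.trans (one_mul _).symm)
    rw [ht1, one_mul] at e0 e1
    refine Or.inl (Subtype.ext (PiLp.ext fun i => ?_))
    fin_cases i
    · exact e0
    · exact e1

lemma norm_sq_three (x : EuclideanSpace ℂ (Fin 3)) :
    ‖x‖^2 = ‖x 0‖^2 + ‖x 1‖^2 + ‖x 2‖^2 := by
  rw [EuclideanSpace.norm_eq, Real.sq_sqrt (by positivity)]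
  simp [Fin.sum_univ_three]

lemma fB_surj (x : Sph) : ∃ z : Ball, sphereCircleRel3 (fB z) x := by
  have hx : ‖(x : EuclideanSpace ℂ (Fin 3))‖ = 1 := mem_sphere_zero_iff_norm.mp x.2
  set c : ℂ := (x : EuclideanSpace ℂ (Fin 3)) 2 with hc
  -- pick t with t * c = ‖c‖
  obtain ⟨t, htc⟩ : ∃ t : Circle, (t : ℂ) * c = (‖c‖ : ℂ) := by
    by_cases h0 : c = 0
    · exact ⟨1, by simp [h0]⟩
    · refine ⟨⟨(starRingEnd ℂ) c / ‖c‖, mem_sphere_zero_iff_norm.mpr ?_⟩, ?_⟩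
      · rw [norm_div, RCLike.norm_conj, Complex.norm_real, Real.norm_eq_abs, abs_norm]
        exact div_self (norm_ne_zero_iff.mpr h0)
      · have h1 : (starRingEnd ℂ) c * c = (‖c‖:ℂ)^2 := by
          rw [mul_comm, Complex.mul_conj, Complex.normSq_eq_norm_sq]
          push_cast
          ring
        have hcn : ((‖c‖:ℝ):ℂ) ≠ 0 := by
          exact_mod_cast norm_ne_zero_iff.mpr h0
        rw [div_mul_eq_mul_div, h1, sq, mul_div_assoc, div_self hcn, mul_one]
  set zvec : EuclideanSpace ℂ (Fin 2) :=
    (WithLp.equiv 2 (Fin 2 → ℂ)).symm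
      ![(t : ℂ) * (x : EuclideanSpace ℂ (Fin 3)) 0,
        (t : ℂ) * (x : EuclideanSpace ℂ (Fin 3)) 1] with hzvec
  have hz0 : zvec 0 = (t : ℂ) * (x : EuclideanSpace ℂ (Fin 3)) 0 := rfl
  have hz1 : zvec 1 = (t : ℂ) * (x : EuclideanSpace ℂ (Fin 3)) 1 := rfl
  have hzn : ‖zvec‖^2 = 1 - ‖c‖^2 := by
    rw [norm_sq_two, hz0, hz1, norm_mul, norm_mul, circle_norm, one_mul, one_mul]
    have := norm_sq_three (x : EuclideanSpace ℂ (Fin 3))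
    rw [hx] at this
    nlinarith [this]
  have hzle : ‖zvec‖ ≤ 1 := by
    nlinarith [norm_nonneg zvec, norm_nonneg c, sq_nonneg ‖c‖]
  refine ⟨⟨zvec, mem_closedBall_zero_iff.mpr hzle⟩, sEquiv.symm ⟨t, ?_⟩⟩
  ext i
  have hsq : Real.sqrt (1 - ‖zvec‖^2) = ‖c‖ := by
    rw [hzn]; simpa using Real.sqrt_sq (norm_nonneg c)
  fin_cases i
  · simpa [fB, PiLp.smul_apply, smul_eq_mul] using hz0.symm
  · simpa [fB, PiLp.smul_apply, smul_eq_mul] using hz1.symm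
  · simp [fB, PiLp.smul_apply, smul_eq_mul, hsq, ← hc, htc]

def sAct (t : Circle) (x : Sph) : Sph :=
  ⟨(t : ℂ) • (x : EuclideanSpace ℂ (Fin 3)), by
    rw [mem_sphere_zero_iff_norm, norm_smul, circle_norm, one_mul]
    exact mem_sphere_zero_iff_norm.mp x.2⟩

lemma sAct_cont (t : Circle) : Continuous (sAct t) :=
  ((continuous_const_smul _).comp continuous_subtype_val).subtype_mk _

lemma quot_mk_eq_iff (x y : Sph) :
    Quot.mk sphereCircleRel3 x = Quot.mk sphereCircleRel3 y ↔ sphereCircleRel3 x y := by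
  rw [Quot.eq]
  exact sEquiv.eqvGen_iff

lemma q_open : IsOpenMap (Quot.mk sphereCircleRel3) := by
  intro U hU
  rw [isOpen_coinduced]
  have : Quot.mk sphereCircleRel3 ⁻¹' (Quot.mk sphereCircleRel3 '' U)
      = ⋃ t : Circle, sAct t ⁻¹' U := by
    ext x
    simp only [Set.mem_preimage, Set.mem_image, Set.mem_iUnion]
    constructor
    · rintro ⟨u, hu, hq⟩
      obtain ⟨s, hs⟩ := (quot_mk_eq_iff u x).mp hq
      refine ⟨s⁻¹, ?_⟩
      have : sAct s⁻¹ x = u := by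
        apply Subtype.ext
        simp only [sAct, ← hs, smul_smul, Circle.coe_inv]
        rw [inv_mul_cancel₀ (Circle.coe_ne_zero s), one_smul]
      rwa [this]
    · rintro ⟨t, htu⟩
      refine ⟨sAct t x, htu, ?_⟩
      rw [quot_mk_eq_iff]
      refine ⟨t⁻¹, ?_⟩
      simp only [sAct, smul_smul, Circle.coe_inv]
      rw [inv_mul_cancel₀ (Circle.coe_ne_zero t), one_smul]
  rw [this]
  exact isOpen_iUnion fun t => (sAct_cont t).isOpen_preimage U hU

instance : T2Space (Quot sphereCircleRel3) := by
  rw [t2_iff_isClosed_diagonal]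
  have hq : Topology.IsQuotientMap
      (Prod.map (Quot.mk sphereCircleRel3) (Quot.mk sphereCircleRel3)) :=
    IsOpenMap.isQuotientMap (q_open.prodMap q_open)
      (continuous_quot_mk.prodMap continuous_quot_mk)
      (by
        rintro ⟨a, b⟩
        obtain ⟨x, hx⟩ := Quot.exists_rep a
        obtain ⟨y, hy⟩ := Quot.exists_rep b
        exact ⟨(x, y), by simp [hx, hy]⟩)
  rw [← hq.isClosed_preimage]
  have : Prod.map (Quot.mk sphereCircleRel3) (Quot.mk sphereCircleRel3) ⁻¹' Set.diagonal _
      = (fun p : Circle × Sph => (p.2, sAct p.1 p.2)) '' Set.univ := by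
    ext ⟨x, y⟩
    simp only [Set.mem_preimage, Set.mem_diagonal_iff, Prod.map_apply, Set.image_univ,
      Set.mem_range, Prod.mk.injEq]
    rw [quot_mk_eq_iff]
    constructor
    · rintro ⟨t, ht⟩
      exact ⟨(t, x), rfl, Subtype.ext ht⟩
    · rintro ⟨⟨t, u⟩, rfl, h2⟩
      exact ⟨t, congrArg Subtype.val h2⟩
  rw [this]
  apply IsCompact.isClosed
  apply IsCompact.image isCompact_univ
  refine Continuous.prodMk continuous_snd ?_
  exact Continuous.subtype_mk
    ((continuous_subtype_val.comp continuous_fst).smul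
      (continuous_subtype_val.comp continuous_snd)) _

instance : CompactSpace Ball :=
  isCompact_iff_compactSpace.mp (isCompact_closedBall _ _)


/-- Attaching the cone on `S³` to `ℂP¹` along the Hopf map yields `ℂP²`, i.e. the
quotient of the closed ball `D⁴ ⊆ ℂ²` by the boundary circle action is homeomorphic to
the quotient `S⁵/S¹ = ℂP²`. -/
theorem stmt10 :
    Nonempty (Quot hopfAttachRel ≃ₜ Quot sphereCircleRel3) := by
  have hbij : Function.Bijective (Quot.map fB (fun _ _ h => fB_rel h)) := by
    constructor
    · intro a b
      induction a using Quot.ind with | _ z =>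
      induction b using Quot.ind with | _ w =>
      intro h
      simp only [Quot.map] at h
      exact Quot.sound (fB_inj ((quot_mk_eq_iff _ _).mp h))
    · intro b
      induction b using Quot.ind with | _ x =>
      obtain ⟨z, hz⟩ := fB_surj x
      exact ⟨Quot.mk _ z, Quot.sound hz⟩
  exact ⟨Continuous.homeoOfEquivCompactToT2
    (f := Equiv.ofBijective _ hbij)
    (continuous_quot_lift _ (continuous_quot_mk.comp fB_cont))⟩
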